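/- Let Q : ℝ^d → ℝ be a positive Schwartz function solving −ΔQ + Q − Q^p = 0 pointwise on ℝ^d. Then the energy of Q satisfies E(Q) = ((d(p−1)−4)/(2d(p−1))) · ∫ |∇Q|² dx; in particular E(Q) > 0 and the virial functional vanishes at Q: K(Q) = 0. -/

import Mathlib

open MeasureTheory

/-- The Laplacian of a real-valued function on `ℝ^d`. -/
noncomputable def lapR {d : ℕ} (f : EuclideanSpace ℝ (Fin d) → ℝ)
    (x : EuclideanSpace ℝ (Fin d)) : ℝ :=
  ∑ i : Fin d,
    fderiv ℝ (fun y => fderiv ℝ f y (EuclideanSpace.single i 1)) x (EuclideanSpace.single i 1)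

/-- The energy `E(f) = (1/2)∫|∇f|² - (1/(p+1))∫|f|^{p+1}`. -/
noncomputable def energy {d : ℕ} (p : ℝ) (f : EuclideanSpace ℝ (Fin d) → ℂ) : ℝ :=
  (1 / 2) * (∫ x, ‖fderiv ℝ f x‖ ^ 2) - (1 / (p + 1)) * ∫ x, ‖f x‖ ^ (p + 1)

/-- The virial functional `K(f) = ∫|∇f|² - (d(p-1)/(2(p+1)))∫|f|^{p+1}`. -/
noncomputable def virialK {d : ℕ} (p : ℝ) (f : EuclideanSpace ℝ (Fin d) → ℂ) : ℝ :=
  (∫ x, ‖fderiv ℝ f x‖ ^ 2) - ((d : ℝ) * (p - 1) / (2 * (p + 1))) * ∫ x, ‖f x‖ ^ (p + 1)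

noncomputable section GSAux
open SchwartzMap


variable {d : ℕ}

abbrev Ed (d : ℕ) := EuclideanSpace ℝ (Fin d)

def ee (d : ℕ) (i : Fin d) : Ed d := EuclideanSpace.single i 1

lemma schwartz_temperate (f : 𝓢(Ed d, ℝ)) : Function.HasTemperateGrowth ⇑f :=
  ⟨f.smooth ⊤, fun n => ⟨0, SchwartzMap.seminorm ℝ 0 n f, fun x => by
    simpa using f.norm_iteratedFDeriv_le_seminorm ℝ n x⟩⟩

lemma coord_temperate (j : Fin d) :
    Function.HasTemperateGrowth (fun x : Ed d => x j) :=
  (EuclideanSpace.proj (𝕜 := ℝ) j).hasTemperateGrowth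

lemma integrable_mul_temp (f : 𝓢(Ed d, ℝ)) {g : Ed d → ℝ}
    (hg : Function.HasTemperateGrowth g) :
    Integrable (fun x => f x * g x) volume :=
  (SchwartzMap.bilinLeftCLM (ContinuousLinearMap.mul ℝ ℝ) hg f).integrable

lemma integrable_mul_schwartz (f g : 𝓢(Ed d, ℝ)) :
    Integrable (fun x => f x * g x) volume :=
  integrable_mul_temp f (schwartz_temperate g)

/-- norm squared of a linear functional on Euclidean space -/
lemma norm_sq_eq_sum (L : Ed d →L[ℝ] ℝ) :
    ‖L‖ ^ 2 = ∑ i, L (ee d i) * L (ee d i) := by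
  set v := (InnerProductSpace.toDual ℝ (Ed d)).symm L with hv
  have hnorm : ‖L‖ = ‖v‖ := ((InnerProductSpace.toDual ℝ (Ed d)).symm.norm_map L).symm
  have happ : ∀ x, L x = inner ℝ v x := fun x => (InnerProductSpace.toDual_symm_apply).symm
  rw [hnorm]
  have h1 : ‖v‖ ^ 2 = ∑ i, ‖v i‖ ^ 2 := by
    rw [EuclideanSpace.norm_eq, Real.sq_sqrt (by positivity)]
  rw [h1]
  refine Finset.sum_congr rfl fun i _ => ?_
  rw [happ (ee d i)]
  have : (inner ℝ v (ee d i) : ℝ) = v i := by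
    simp [ee, EuclideanSpace.inner_single_right]
  rw [this, Real.norm_eq_abs, sq_abs, sq]

/-- basic integration by parts for Schwartz functions -/
lemma ibp_schwartz (f g : 𝓢(Ed d, ℝ)) (v : Ed d) :
    ∫ x, f x * fderiv ℝ (⇑g) x v = - ∫ x, fderiv ℝ (⇑f) x v * g x := by
  apply integral_mul_fderiv_eq_neg_fderiv_mul_of_integrable
  · have := integrable_mul_schwartz (LineDeriv.lineDerivOpCLM ℝ 𝓢(Ed d, ℝ) v f) g
    simpa [LineDeriv.lineDerivOpCLM_apply, SchwartzMap.lineDerivOp_apply_eq_fderiv] using this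
  · have := integrable_mul_temp f (schwartz_temperate (LineDeriv.lineDerivOpCLM ℝ 𝓢(Ed d, ℝ) v g))
    simpa [LineDeriv.lineDerivOpCLM_apply, SchwartzMap.lineDerivOp_apply_eq_fderiv] using this
  · exact integrable_mul_schwartz f g
  · exact fun x _ => f.differentiableAt
  · exact fun x _ => g.differentiableAt

/-- weighted integration by parts: `∫ xⱼ ∂ⱼF = -∫ F` -/
lemma ibp_coord (F : 𝓢(Ed d, ℝ)) (j : Fin d) :
    ∫ x : Ed d, x j * fderiv ℝ (⇑F) x (ee d j) = - ∫ x, F x := by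
  have hcoe : (fun x : Ed d => x j) = ⇑(EuclideanSpace.proj (𝕜 := ℝ) j) := rfl
  have hD : Differentiable ℝ (fun x : Ed d => x j) := by
    rw [hcoe]; exact (EuclideanSpace.proj (𝕜 := ℝ) j).differentiable
  have hfd : ∀ x : Ed d, fderiv ℝ (fun y : Ed d => y j) x (ee d j) = 1 := by
    intro x
    rw [hcoe, ContinuousLinearMap.fderiv]
    simp [ee, EuclideanSpace.proj, EuclideanSpace.single_apply]
  have h := integral_mul_fderiv_eq_neg_fderiv_mul_of_integrable
      (μ := volume) (f := fun x : Ed d => x j) (g := ⇑F) (v := ee d j)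
      ?_ ?_ ?_ (fun x _ => hD x) (fun x _ => F.differentiableAt)
  · rw [h]
    congr 1
    refine integral_congr_ae (Filter.Eventually.of_forall fun x => ?_)
    simp only [hfd x, one_mul]
  · refine (F.integrable (μ := volume)).congr ?_
    refine Filter.Eventually.of_forall fun x => ?_
    simp only [hfd x, one_mul]
  · have := integrable_mul_temp (LineDeriv.lineDerivOpCLM ℝ 𝓢(Ed d, ℝ) (ee d j) F) (coord_temperate j)
    refine this.congr (Filter.Eventually.of_forall fun x => ?_)
    simp [LineDeriv.lineDerivOpCLM_apply, SchwartzMap.lineDerivOp_apply_eq_fderiv, mul_comm]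
  · have := integrable_mul_temp F (coord_temperate j)
    refine this.congr (Filter.Eventually.of_forall fun x => ?_)
    simp [mul_comm]

lemma sum_ibp_coord (F : 𝓢(Ed d, ℝ)) :
    ∑ j, ∫ x : Ed d, x j * fderiv ℝ (⇑F) x (ee d j) = - (d : ℝ) * ∫ x, F x := by
  simp only [ibp_coord, Finset.sum_const, Finset.card_univ, Fintype.card_fin, nsmul_eq_mul]
  ring

lemma schwartz_sum_apply {ι : Type*} (s : Finset ι) (f : ι → 𝓢(Ed d, ℝ)) (x : Ed d) :
    (∑ i ∈ s, f i) x = ∑ i ∈ s, f i x :=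
  map_sum ((Pi.evalAddMonoidHom (fun _ : Ed d => ℝ) x).comp
    (FunLike.coeAddMonoidHom 𝓢(Ed d, ℝ) (Ed d) ℝ)) f s

/-- Pointwise second-derivative symmetry for Schwartz maps. -/
lemma pderiv_symm (Q : 𝓢(Ed d, ℝ)) (i j : Fin d) (x : Ed d) :
    fderiv ℝ (fun y => fderiv ℝ (⇑Q) y (ee d j)) x (ee d i) =
    fderiv ℝ (fun y => fderiv ℝ (⇑Q) y (ee d i)) x (ee d j) := by
  have hf' : ∀ y, HasFDerivAt (⇑Q) (fderiv ℝ (⇑Q) y) y :=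
    fun y => Q.differentiableAt.hasFDerivAt
  have hD2 : DifferentiableAt ℝ (fderiv ℝ (⇑Q)) x := by
    have h1 : ContDiff ℝ 1 (fderiv ℝ (⇑Q)) :=
      (Q.smooth ⊤).fderiv_right (m := 1) (by exact WithTop.coe_le_coe.mpr le_top |>.trans_eq' (by norm_cast))
    exact (h1.differentiable one_ne_zero) x
  have hx : HasFDerivAt (fderiv ℝ (⇑Q)) (fderiv ℝ (fderiv ℝ (⇑Q)) x) x := hD2.hasFDerivAt
  have sym := second_derivative_symmetric_of_eventually_of_real
    (Filter.Eventually.of_forall hf') hx (ee d i) (ee d j)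
  have key : ∀ v : Ed d, fderiv ℝ (fun y => fderiv ℝ (⇑Q) y v) x =
      (ContinuousLinearMap.apply ℝ ℝ v).comp (fderiv ℝ (fderiv ℝ (⇑Q)) x) := by
    intro v
    have : (fun y => fderiv ℝ (⇑Q) y v) =
        (ContinuousLinearMap.apply ℝ ℝ v) ∘ (fderiv ℝ (⇑Q)) := rfl
    rw [this]
    exact ((ContinuousLinearMap.apply ℝ ℝ v).hasFDerivAt.comp x hD2.hasFDerivAt).fderiv
  rw [key (ee d j), key (ee d i)]
  simpa using sym

set_option maxHeartbeats 1000000 in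
lemma main_ident (d : ℕ) (hd : 0 < d) (p : ℝ) (hp : 1 < p)
    (Q : 𝓢(Ed d, ℝ)) (hQpos : ∀ x, 0 < Q x)
    (hQeq : ∀ x, -lapR (⇑Q) x + Q x - Q x ^ p = 0) :
    (∫ x, ‖fderiv ℝ (⇑Q) x‖ ^ 2) =
      ((d : ℝ) * (p - 1) / (2 * (p + 1))) * ∫ x, (Q x) ^ (p + 1) ∧
    0 < ∫ x, ‖fderiv ℝ (⇑Q) x‖ ^ 2 := by
  have hp1 : p + 1 ≠ 0 := by positivity
  -- first partial derivatives as Schwartz maps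
  set Pd : Fin d → 𝓢(Ed d, ℝ) := fun i => LineDeriv.lineDerivOpCLM ℝ 𝓢(Ed d, ℝ) (ee d i) Q with hPdDef
  have hPd : ∀ i x, Pd i x = fderiv ℝ (⇑Q) x (ee d i) := fun i x => rfl
  have hcoePd : ∀ i, ⇑(Pd i) = fun y => fderiv ℝ (⇑Q) y (ee d i) := fun i => rfl
  -- the Laplacian as a Schwartz map
  set L : 𝓢(Ed d, ℝ) := ∑ i, LineDeriv.lineDerivOpCLM ℝ 𝓢(Ed d, ℝ) (ee d i) (Pd i) with hLdef
  have hL : ∀ x, L x = lapR (⇑Q) x := by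
    intro x
    rw [hLdef, schwartz_sum_apply]
    rfl
  set R : 𝓢(Ed d, ℝ) := Q - L with hRdef
  have hR : ∀ x, R x = Q x ^ p := by
    intro x
    have h := hQeq x
    have hLx := hL x
    simp only [hRdef, SchwartzMap.sub_apply]
    linarith
  -- abbreviations
  set M : ℝ := ∫ x, Q x * Q x with hM
  set τ : ℝ := ∑ i, ∫ x, Pd i x * Pd i x with hτ
  set P : ℝ := ∫ x, (Q x) ^ (p + 1) with hP
  -- the gradient-square integral equals τ
  have hT : (∫ x, ‖fderiv ℝ (⇑Q) x‖ ^ 2) = τ := by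
    rw [hτ, ← integral_finset_sum _ (fun i _ => integrable_mul_schwartz (Pd i) (Pd i))]
    refine integral_congr_ae (Filter.Eventually.of_forall fun x => ?_)
    show ‖fderiv ℝ (⇑Q) x‖ ^ 2 = ∑ i, Pd i x * Pd i x
    rw [norm_sq_eq_sum]
    rfl
  -- Identity 1 : P = M + τ
  have hLQ : (∫ x, L x * Q x) = -τ := by
    have hsplit : (∫ x, L x * Q x) =
        ∑ i, ∫ x, (LineDeriv.lineDerivOpCLM ℝ 𝓢(Ed d, ℝ) (ee d i) (Pd i)) x * Q x := by
      rw [← integral_finset_sum _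
        (fun i _ => integrable_mul_schwartz (LineDeriv.lineDerivOpCLM ℝ 𝓢(Ed d, ℝ) (ee d i) (Pd i)) Q)]
      refine integral_congr_ae (Filter.Eventually.of_forall fun x => ?_)
      show L x * Q x = ∑ i, (LineDeriv.lineDerivOpCLM ℝ 𝓢(Ed d, ℝ) (ee d i) (Pd i)) x * Q x
      rw [hLdef, schwartz_sum_apply, Finset.sum_mul]
    rw [hsplit, hτ, ← Finset.sum_neg_distrib]
    refine Finset.sum_congr rfl fun i _ => ?_
    have hibp := ibp_schwartz Q (Pd i) (ee d i)
    have h1 : (∫ x, (LineDeriv.lineDerivOpCLM ℝ 𝓢(Ed d, ℝ) (ee d i) (Pd i)) x * Q x)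
        = ∫ x, Q x * fderiv ℝ (⇑(Pd i)) x (ee d i) := by
      refine integral_congr_ae (Filter.Eventually.of_forall fun x => ?_)
      simp [LineDeriv.lineDerivOpCLM_apply, SchwartzMap.lineDerivOp_apply_eq_fderiv, mul_comm]
    rw [h1, hibp]
    rfl
  have hI1 : P = M + τ := by
    have e1 : (∫ x, (Q x) ^ (p + 1)) = ∫ x, R x * Q x := by
      refine integral_congr_ae (Filter.Eventually.of_forall fun x => ?_)
      show Q x ^ (p + 1) = R x * Q x
      rw [hR x, Real.rpow_add (hQpos x), Real.rpow_one]
    have e2 : (∫ x, R x * Q x) = (∫ x, Q x * Q x) - ∫ x, L x * Q x := by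
      have : (fun x => R x * Q x) = fun x => Q x * Q x - L x * Q x := by
        funext x
        simp only [hRdef, SchwartzMap.sub_apply]
        ring
      rw [this]
      exact integral_sub (integrable_mul_schwartz Q Q) (integrable_mul_schwartz L Q)
    rw [hP, e1, e2, hLQ, hM]
    ring
  -- helper : squares
  have fderiv_sq_apply : ∀ (f : 𝓢(Ed d, ℝ)) (x : Ed d) (v : Ed d),
      fderiv ℝ (fun y => f y * f y) x v = 2 * (f x * fderiv ℝ (⇑f) x v) := by
    intro f x v
    rw [fderiv_fun_mul f.differentiableAt f.differentiableAt]
    simp only [ContinuousLinearMap.add_apply, ContinuousLinearMap.coe_smul',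
      Pi.smul_apply, smul_eq_mul]
    ring
  have sum_ibp_sq : ∀ f : 𝓢(Ed d, ℝ),
      ∑ j, ∫ x : Ed d, x j * (f x * fderiv ℝ (⇑f) x (ee d j))
        = -((d : ℝ)/2) * ∫ x, f x * f x := by
    intro f
    set Gf : 𝓢(Ed d, ℝ) :=
      bilinLeftCLM (ContinuousLinearMap.mul ℝ ℝ) (schwartz_temperate f) f with hGf
    have hcoe : ⇑Gf = fun y => f y * f y := rfl
    have h := sum_ibp_coord Gf
    have per : ∀ j, ∫ x : Ed d, x j * fderiv ℝ (⇑Gf) x (ee d j)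
        = 2 * ∫ x : Ed d, x j * (f x * fderiv ℝ (⇑f) x (ee d j)) := by
      intro j
      rw [← integral_const_mul]
      refine integral_congr_ae (Filter.Eventually.of_forall fun x => ?_)
      show x j * fderiv ℝ (⇑Gf) x (ee d j) = 2 * (x j * (f x * fderiv ℝ (⇑f) x (ee d j)))
      rw [hcoe, fderiv_sq_apply f x (ee d j)]
      ring
    have hGfint : (∫ x, Gf x) = ∫ x, f x * f x := rfl
    simp only [per] at h
    rw [← Finset.mul_sum] at h
    rw [hGfint] at h
    linarith
  -- integrability helper with a coordinate weight
  have integrable_coord_mul : ∀ (j : Fin d) (f : 𝓢(Ed d, ℝ)) {g : Ed d → ℝ},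
      Function.HasTemperateGrowth g →
      Integrable (fun x : Ed d => x j * (f x * g x)) volume := by
    intro j f g hg
    have := integrable_mul_temp
      (bilinLeftCLM (ContinuousLinearMap.mul ℝ ℝ) hg f) (coord_temperate j)
    refine this.congr (Filter.Eventually.of_forall fun x => ?_)
    show (f x * g x) * x j = x j * (f x * g x)
    ring
  -- part (b)
  have hB : ∑ j, ∫ x : Ed d, x j * (Pd j x * Q x) = -((d : ℝ)/2) * M := by
    rw [hM, ← sum_ibp_sq Q]
    refine Finset.sum_congr rfl fun j _ => ?_
    refine integral_congr_ae (Filter.Eventually.of_forall fun x => ?_)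
    show x j * (Pd j x * Q x) = x j * (Q x * fderiv ℝ (⇑Q) x (ee d j))
    rw [hPd j x]; ring
  -- part (c)
  have hCij : ∀ (i j : Fin d),
      ∫ x : Ed d, x j * (Pd j x * fderiv ℝ (⇑(Pd i)) x (ee d i))
        = -((if j = i then 1 else 0) * ∫ x, Pd i x * Pd i x)
          - ∫ x : Ed d, x j * (Pd i x * fderiv ℝ (⇑(Pd i)) x (ee d j)) := by
    intro i j
    set Aj : 𝓢(Ed d, ℝ) :=
      bilinLeftCLM (ContinuousLinearMap.mul ℝ ℝ) (coord_temperate j) (Pd j) with hAj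
    have hAjcoe : ⇑Aj = fun y : Ed d => Pd j y * y j := rfl
    have hcoordD : Differentiable ℝ (fun x : Ed d => x j) :=
      (EuclideanSpace.proj (𝕜 := ℝ) j).differentiable
    have hAd : ∀ x : Ed d, fderiv ℝ (⇑Aj) x (ee d i)
        = (if j = i then 1 else 0) * Pd j x + x j * fderiv ℝ (⇑(Pd j)) x (ee d i) := by
      intro x
      rw [hAjcoe, fderiv_fun_mul (Pd j).differentiableAt (hcoordD x)]
      have hproj : fderiv ℝ (fun y : Ed d => y j) x (ee d i) = if j = i then 1 else 0 := by
        rw [show (fun y : Ed d => y j) = ⇑(EuclideanSpace.proj (𝕜 := ℝ) j) from rfl,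
          ContinuousLinearMap.fderiv]
        simp [ee, EuclideanSpace.proj, EuclideanSpace.single_apply]
      simp only [ContinuousLinearMap.add_apply, ContinuousLinearMap.coe_smul',
        Pi.smul_apply, smul_eq_mul, hproj]
      ring
    have hsymm : ∀ x : Ed d,
        fderiv ℝ (⇑(Pd j)) x (ee d i) = fderiv ℝ (⇑(Pd i)) x (ee d j) := by
      intro x
      rw [hcoePd j, hcoePd i]
      exact pderiv_symm Q i j x
    have step1 : ∫ x : Ed d, x j * (Pd j x * fderiv ℝ (⇑(Pd i)) x (ee d i))
        = ∫ x : Ed d, Aj x * fderiv ℝ (⇑(Pd i)) x (ee d i) := by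
      refine integral_congr_ae (Filter.Eventually.of_forall fun x => ?_)
      show x j * (Pd j x * fderiv ℝ (⇑(Pd i)) x (ee d i))
        = (Pd j x * x j) * fderiv ℝ (⇑(Pd i)) x (ee d i)
      ring
    rw [step1, ibp_schwartz Aj (Pd i) (ee d i)]
    have step2 : ∫ x : Ed d, fderiv ℝ (⇑Aj) x (ee d i) * Pd i x
        = (∫ x : Ed d, (if j = i then 1 else 0) * (Pd i x * Pd i x))
          + ∫ x : Ed d, x j * (Pd i x * fderiv ℝ (⇑(Pd i)) x (ee d j)) := by
      rw [← integral_add]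
      · refine integral_congr_ae (Filter.Eventually.of_forall fun x => ?_)
        show fderiv ℝ (⇑Aj) x (ee d i) * Pd i x
          = (if j = i then 1 else 0) * (Pd i x * Pd i x)
            + x j * (Pd i x * fderiv ℝ (⇑(Pd i)) x (ee d j))
        rw [hAd x, hsymm x]
        by_cases hji : j = i
        · subst hji; simp; ring
        · simp [hji]; ring
      · exact (integrable_mul_schwartz (Pd i) (Pd i)).const_mul _
      · exact integrable_coord_mul j (Pd i)
          (schwartz_temperate (LineDeriv.lineDerivOpCLM ℝ 𝓢(Ed d, ℝ) (ee d j) (Pd i)))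
    rw [step2, integral_const_mul]
    ring
  have hC : ∑ j, ∫ x : Ed d, x j * (Pd j x * L x) = -τ + ((d : ℝ)/2) * τ := by
    have expand : ∀ j, ∫ x : Ed d, x j * (Pd j x * L x)
        = ∑ i, ∫ x : Ed d, x j * (Pd j x * fderiv ℝ (⇑(Pd i)) x (ee d i)) := by
      intro j
      calc ∫ x : Ed d, x j * (Pd j x * L x)
          = ∫ x : Ed d, ∑ i, x j * (Pd j x * fderiv ℝ (⇑(Pd i)) x (ee d i)) := by
            refine integral_congr_ae (Filter.Eventually.of_forall fun x => ?_)
            show x j * (Pd j x * L x)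
              = ∑ i, x j * (Pd j x * fderiv ℝ (⇑(Pd i)) x (ee d i))
            rw [show L x = ∑ i, (LineDeriv.lineDerivOpCLM ℝ 𝓢(Ed d, ℝ) (ee d i) (Pd i)) x from by
              rw [hLdef, schwartz_sum_apply], Finset.mul_sum, Finset.mul_sum]
            rfl
        _ = ∑ i, ∫ x : Ed d, x j * (Pd j x * fderiv ℝ (⇑(Pd i)) x (ee d i)) := by
            refine integral_finset_sum _ (fun i _ => ?_)
            exact integrable_coord_mul j (Pd j)
              (schwartz_temperate (LineDeriv.lineDerivOpCLM ℝ 𝓢(Ed d, ℝ) (ee d i) (Pd i)))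
    simp only [expand, hCij]
    simp only [Finset.sum_sub_distrib]
    have t1 : ∑ j, ∑ i, -((if j = i then (1:ℝ) else 0) * ∫ x, Pd i x * Pd i x) = -τ := by
      rw [hτ, ← Finset.sum_neg_distrib]
      refine Finset.sum_congr rfl fun j _ => ?_
      rw [Finset.sum_eq_single j]
      · simp
      · intro i _ hij; simp [Ne.symm hij]
      · intro h; exact absurd (Finset.mem_univ j) h
    have t2 : ∑ j, ∑ i, ∫ x : Ed d, x j * (Pd i x * fderiv ℝ (⇑(Pd i)) x (ee d j))
        = -((d : ℝ)/2) * τ := by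
      rw [Finset.sum_comm, hτ, Finset.mul_sum]
      refine Finset.sum_congr rfl fun i _ => ?_
      rw [sum_ibp_sq (Pd i)]
    rw [t1, t2]
    ring
  -- way 2 : Pohozaev via the nonlinearity
  set U : 𝓢(Ed d, ℝ) :=
    bilinLeftCLM (ContinuousLinearMap.mul ℝ ℝ) (schwartz_temperate Q) R with hUdef
  have hUeq : ∀ x, U x = Q x ^ (p + 1) := by
    intro x
    show R x * Q x = Q x ^ (p + 1)
    rw [hR x, Real.rpow_add (hQpos x), Real.rpow_one]
  have hUcoe : ⇑U = fun y => Q y ^ (p + 1) := funext hUeq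
  have hUd : ∀ (x : Ed d) (v : Ed d),
      fderiv ℝ (⇑U) x v = (p + 1) * (Q x ^ p * fderiv ℝ (⇑Q) x v) := by
    intro x v
    rw [hUcoe]
    have hr := Real.hasDerivAt_rpow_const (x := Q x) (p := p + 1) (Or.inl (hQpos x).ne')
    have hcomp := hr.comp_hasFDerivAt x Q.differentiableAt.hasFDerivAt
    rw [show (fun y => Q y ^ (p + 1)) = (fun t : ℝ => t ^ (p + 1)) ∘ ⇑Q from rfl,
      hcomp.fderiv]
    simp only [ContinuousLinearMap.coe_smul', Pi.smul_apply, smul_eq_mul,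
      add_sub_cancel_right]
    ring
  have hUint : (∫ x, U x) = P := by
    rw [hP]
    refine integral_congr_ae (Filter.Eventually.of_forall fun x => ?_)
    exact hUeq x
  have hWay2 : ∑ j, ∫ x : Ed d, x j * (Pd j x * R x) = -((d : ℝ)/(p + 1)) * P := by
    have h := sum_ibp_coord U
    have per : ∀ j, ∫ x : Ed d, x j * fderiv ℝ (⇑U) x (ee d j)
        = (p + 1) * ∫ x : Ed d, x j * (Pd j x * R x) := by
      intro j
      rw [← integral_const_mul]
      refine integral_congr_ae (Filter.Eventually.of_forall fun x => ?_)
      show x j * fderiv ℝ (⇑U) x (ee d j) = (p + 1) * (x j * (Pd j x * R x))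
      rw [hUd x (ee d j), hR x, hPd j x]
      ring
    simp only [per] at h
    rw [← Finset.mul_sum, hUint] at h
    have hd2 : (p + 1) ≠ 0 := hp1
    field_simp
    simp only [mul_assoc]
    linarith
  -- way 1
  have hsplitR : ∀ j, ∫ x : Ed d, x j * (Pd j x * R x)
      = (∫ x : Ed d, x j * (Pd j x * Q x)) - ∫ x : Ed d, x j * (Pd j x * L x) := by
    intro j
    rw [← integral_sub (integrable_coord_mul j (Pd j) (schwartz_temperate Q))
      (integrable_coord_mul j (Pd j) (schwartz_temperate L))]
    refine integral_congr_ae (Filter.Eventually.of_forall fun x => ?_)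
    show x j * (Pd j x * R x) = x j * (Pd j x * Q x) - x j * (Pd j x * L x)
    rw [show R x = Q x - L x from by rw [hRdef]; rfl]
    ring
  have hWay1 : ∑ j, ∫ x : Ed d, x j * (Pd j x * R x)
      = -((d : ℝ)/2) * M - (-τ + ((d : ℝ)/2) * τ) := by
    simp only [hsplitR]
    rw [Finset.sum_sub_distrib, hB, hC]
  have hPoh : -((d : ℝ)/2) * M - (-τ + ((d : ℝ)/2) * τ) = -((d : ℝ)/(p + 1)) * P := by
    rw [← hWay1, hWay2]
  -- conclusion
  have hMeq : M = P - τ := by linarith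
  have hkey : τ = ((d : ℝ) * (p - 1) / (2 * (p + 1))) * P := by
    rw [hMeq] at hPoh
    field_simp at hPoh ⊢
    ring_nf at hPoh ⊢
    linarith
  constructor
  · rw [hT, hkey, hP]
  · -- positivity
    rw [hT]
    have hnonneg : ∀ i : Fin d, (0:ℝ) ≤ ∫ x, Pd i x * Pd i x :=
      fun i => integral_nonneg fun x => mul_self_nonneg _
    rcases eq_or_lt_of_le (Finset.sum_nonneg fun i _ => hnonneg i) with h0 | h0
    swap
    · rw [hτ]; exact h0
    exfalso
    -- each integral vanishes, hence each partial derivative vanishes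
    have hzero : ∀ i : Fin d, ∀ x, Pd i x = 0 := by
      intro i
      have hi : (∫ x, Pd i x * Pd i x) = 0 := by
        have := (Finset.sum_eq_zero_iff_of_nonneg
          (fun i _ => hnonneg i)).mp h0.symm i (Finset.mem_univ i)
        exact this
      have hae := (integral_eq_zero_iff_of_nonneg
        (fun x => mul_self_nonneg (Pd i x)) (integrable_mul_schwartz (Pd i) (Pd i))).mp hi
      have hcont : Continuous (fun x : Ed d => Pd i x * Pd i x) :=
        (Pd i).continuous.mul (Pd i).continuous
      have heq : (fun x : Ed d => Pd i x * Pd i x) = 0 :=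
        (hcont.ae_eq_iff_eq volume continuous_const).mp hae
      intro x
      have := congrFun heq x
      simpa [mul_self_eq_zero] using this
    have hfz : ∀ x : Ed d, fderiv ℝ (⇑Q) x = 0 := by
      intro x
      have hn : ‖fderiv ℝ (⇑Q) x‖ ^ 2 = 0 := by
        rw [norm_sq_eq_sum]
        refine Finset.sum_eq_zero fun i _ => ?_
        have := hzero i x
        rw [hPd i x] at this
        rw [this, mul_zero]
      have := pow_eq_zero_iff (n := 2) (by norm_num) |>.mp hn
      exact norm_eq_zero.mp this
    have hconst : ∀ x : Ed d, Q x = Q 0 :=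
      fun x => is_const_of_fderiv_eq_zero Q.differentiable hfz x 0
    have : Nontrivial (Ed d) := by
      refine ⟨⟨EuclideanSpace.single ⟨0, hd⟩ 1, 0, fun h => ?_⟩⟩
      have h2 : EuclideanSpace.single (⟨0, hd⟩ : Fin d) (1:ℝ) ⟨0, hd⟩ = (0 : Ed d) ⟨0, hd⟩ := by
        rw [h]
      simp [EuclideanSpace.single_apply] at h2
    have htends : Filter.Tendsto (⇑Q) (Filter.cocompact (Ed d)) (nhds 0) :=
      zero_at_infty Q
    have htends' : Filter.Tendsto (fun _ : Ed d => Q 0)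
        (Filter.cocompact (Ed d)) (nhds 0) := by
      refine htends.congr fun x => hconst x
    have hQ0 : Q 0 = 0 := tendsto_nhds_unique tendsto_const_nhds htends'
    exact (hQpos 0).ne' hQ0

end GSAux

/-- Energy of the ground state: `E(Q) = ((d(p-1)-4)/(2d(p-1))) ∫|∇Q|²`, so `E(Q) > 0`,
and the virial functional vanishes at `Q`. -/
theorem ground_state_energy
    (d : ℕ) (hd : 0 < d) (p : ℝ)
    (hp1 : 1 + 4 / (d : ℝ) < p)
    (hp2 : 3 ≤ d → p < ((d : ℝ) + 2) / ((d : ℝ) - 2))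
    (Q : SchwartzMap (EuclideanSpace ℝ (Fin d)) ℝ)
    (hQpos : ∀ x, 0 < Q x)
    (hQeq : ∀ x, -lapR (⇑Q) x + Q x - Q x ^ p = 0) :
    energy p (fun x => (Q x : ℂ)) =
        (((d : ℝ) * (p - 1) - 4) / (2 * (d : ℝ) * (p - 1))) * ∫ x, ‖fderiv ℝ (⇑Q) x‖ ^ 2 ∧
    0 < energy p (fun x => (Q x : ℂ)) ∧
    virialK p (fun x => (Q x : ℂ)) = 0 := by
  have hd' : (0:ℝ) < (d:ℝ) := by exact_mod_cast hd
  have hp : 1 < p := by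
    have h4 : 0 < 4 / (d:ℝ) := by positivity
    linarith
  have hp1ne : p + 1 ≠ 0 := by positivity
  have hdp4 : 4 < (d:ℝ) * (p - 1) := by
    have h1 : 4 / (d:ℝ) < p - 1 := by linarith
    calc (4:ℝ) = (4 / (d:ℝ)) * (d:ℝ) := by field_simp
    _ < (p - 1) * (d:ℝ) := by
        exact mul_lt_mul_of_pos_right h1 hd'
    _ = (d:ℝ) * (p - 1) := by ring
  have hdp : 0 < (d:ℝ) * (p - 1) := by linarith
  obtain ⟨hkey, hpos⟩ := main_ident d hd p hp Q hQpos hQeq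
  -- notation
  set τ : ℝ := ∫ x, ‖fderiv ℝ (⇑Q) x‖ ^ 2 with hτdef
  set P : ℝ := ∫ x, (Q x) ^ (p + 1) with hPdef
  -- the complex-valued integrals agree with the real ones
  have hgradpt : ∀ x : EuclideanSpace ℝ (Fin d),
      ‖fderiv ℝ (fun y : EuclideanSpace ℝ (Fin d) => (Q y : ℂ)) x‖ = ‖fderiv ℝ (⇑Q) x‖ := by
    intro x
    have hfd : fderiv ℝ (fun y : EuclideanSpace ℝ (Fin d) => (Q y : ℂ)) x
        = Complex.ofRealCLM.comp (fderiv ℝ (⇑Q) x) := by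
      have h1 : HasFDerivAt (⇑Complex.ofRealCLM ∘ ⇑Q)
          (Complex.ofRealCLM.comp (fderiv ℝ (⇑Q) x)) x :=
        Complex.ofRealCLM.hasFDerivAt.comp x Q.differentiableAt.hasFDerivAt
      exact h1.fderiv
    rw [hfd]
    exact Complex.ofRealLI.norm_toContinuousLinearMap_comp
  have hgrad : (∫ x, ‖fderiv ℝ (fun y : EuclideanSpace ℝ (Fin d) => (Q y : ℂ)) x‖ ^ 2) = τ := by
    rw [hτdef]
    refine integral_congr_ae (Filter.Eventually.of_forall fun x => ?_)
    show ‖fderiv ℝ (fun y : EuclideanSpace ℝ (Fin d) => (Q y : ℂ)) x‖ ^ 2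
      = ‖fderiv ℝ (⇑Q) x‖ ^ 2
    rw [hgradpt x]
  have hnormQ : (∫ x, ‖(Q x : ℂ)‖ ^ (p + 1)) = P := by
    rw [hPdef]
    refine integral_congr_ae (Filter.Eventually.of_forall fun x => ?_)
    show ‖(Q x : ℂ)‖ ^ (p + 1) = Q x ^ (p + 1)
    rw [Complex.norm_real, Real.norm_eq_abs, abs_of_pos (hQpos x)]
  have hE : energy p (fun x => (Q x : ℂ))
      = (1/2) * τ - (1/(p+1)) * P := by
    unfold energy
    rw [hgrad, hnormQ]
  have hK : virialK p (fun x => (Q x : ℂ))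
      = τ - ((d : ℝ) * (p - 1) / (2 * (p + 1))) * P := by
    unfold virialK
    rw [hgrad, hnormQ]
  -- main algebra
  have h2 : 2 * (p + 1) * τ = (d:ℝ) * (p - 1) * P := by
    field_simp at hkey
    linarith
  have ePf : (1/(p+1)) * P = 2 / ((d:ℝ) * (p - 1)) * τ := by
    rw [div_mul_eq_mul_div, one_mul, div_mul_eq_mul_div, div_eq_div_iff hp1ne hdp.ne']
    linarith
  have hEval : energy p (fun x => (Q x : ℂ))
      = (((d : ℝ) * (p - 1) - 4) / (2 * (d : ℝ) * (p - 1))) * τ := by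
    rw [hE, ePf]
    have hcoef : (1:ℝ)/2 - 2/((d:ℝ)*(p-1)) = ((d:ℝ)*(p-1)-4)/(2*(d:ℝ)*(p-1)) := by
      rw [div_sub_div _ _ (two_ne_zero) hdp.ne',
        div_eq_div_iff (mul_pos two_pos hdp).ne'
          (by nlinarith : (0:ℝ) < 2*(d:ℝ)*(p-1)).ne']
      ring
    linear_combination τ * hcoef
  refine ⟨hEval, ?_, ?_⟩
  · rw [hEval]
    have hcoef : 0 < ((d : ℝ) * (p - 1) - 4) / (2 * (d : ℝ) * (p - 1)) := by
      apply div_pos (by linarith) (by linarith)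
    exact mul_pos hcoef hpos
  · rw [hK, hkey]
    ring
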